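/- Let f_ε : ℝ^p → ℝ be a family of convex functions (ε > 0) and f : ℝ^p → ℝ a convex function with a unique minimizer u*. If f_ε converges pointwise to f as ε → 0⁺, then any choice of minimizers u_ε ∈ argmin f_ε converges to u* as ε → 0⁺ (assuming each f_ε attains a minimum). -/

import Mathlib

open Filter Topology

lemma upper_bound_on_ball {p : ℕ} (x₀ : Fin p → ℝ) (R : ℝ) (hR : 0 < R) :
    ∃ V : Fin (p + 1) → (Fin p → ℝ),
      ∀ (f : (Fin p → ℝ) → ℝ), ConvexOn ℝ Set.univ f →
        ∀ M : ℝ, (∀ i, f (V i) ≤ M) → ∀ a, dist a x₀ ≤ R → f a ≤ M := by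
  classical
  set c : ℝ := 2 * R * (p + 1) with hc
  have hcpos : 0 < c := by positivity
  set v0 : Fin p → ℝ := fun j => x₀ j - R with hv0
  set V : Fin (p + 1) → (Fin p → ℝ) :=
    Fin.cons v0 (fun i => fun j => v0 j + (if j = i then c else 0)) with hV
  refine ⟨V, ?_⟩
  intro f hf M hM a ha
  have hcoord : ∀ j, |a j - x₀ j| ≤ R := by
    intro j
    have := dist_le_pi_dist a x₀ j
    rw [Real.dist_eq] at this
    linarith [this.trans ha]
  set t : Fin p → ℝ := fun i => (a i - x₀ i + R) / c with htdef
  have ht0 : ∀ i, 0 ≤ t i := by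
    intro i
    have := (abs_le.1 (hcoord i)).1
    apply div_nonneg _ hcpos.le
    linarith
  have htle : ∀ i, t i ≤ 2 * R / c := by
    intro i
    have := (abs_le.1 (hcoord i)).2
    exact div_le_div_of_nonneg_right (by linarith) hcpos.le |>.trans_eq rfl
  have htsum : ∑ i, t i ≤ (p : ℝ) / (p + 1) := by
    calc ∑ i, t i ≤ ∑ _i : Fin p, 2 * R / c := Finset.sum_le_sum fun i _ => htle i
    _ = (p : ℝ) * (2 * R / c) := by simp [mul_comm]
    _ = (p : ℝ) / (p + 1) := by
        rw [hc]; field_simp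
  have htsum1 : ∑ i, t i ≤ 1 := by
    refine htsum.trans ?_
    rw [div_le_one (by positivity)]
    linarith
  set w : Fin (p + 1) → ℝ := Fin.cons (1 - ∑ i, t i) t with hw
  have hw0 : ∀ i, 0 ≤ w i := by
    intro i
    refine Fin.cases ?_ ?_ i
    · simpa [hw] using sub_nonneg.2 htsum1
    · intro j; simpa [hw] using ht0 j
  have hwsum : ∑ i, w i = 1 := by
    rw [hw, Fin.sum_univ_succ]
    simp
  have hrepr : a = ∑ i, w i • V i := by
    funext j
    have h1 : (∑ i, w i • V i) j
        = (1 - ∑ i, t i) * v0 j + ∑ i, t i * (v0 j + (if j = i then c else 0)) := by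
      rw [Fin.sum_univ_succ]
      simp [hw, hV, Finset.sum_apply]
    rw [h1]
    have h2 : ∑ i, t i * (v0 j + (if j = i then c else 0))
        = (∑ i, t i) * v0 j + c * t j := by
      rw [Finset.sum_congr rfl (fun i _ => mul_add (t i) (v0 j) ((if j = i then c else 0))),
        Finset.sum_add_distrib, ← Finset.sum_mul]
      congr 1
      simp [mul_ite, Finset.sum_ite_eq', mul_comm]
    rw [h2]
    have hcj : c * t j = a j - x₀ j + R := by
      rw [htdef]; field_simp
    rw [hcj, hv0]
    ring
  calc f a ≤ ∑ i, w i * f (V i) := by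
        rw [hrepr]
        exact hf.map_sum_le (fun i _ => hw0 i) hwsum (fun i _ => Set.mem_univ _)
    _ ≤ ∑ i, w i * M :=
        Finset.sum_le_sum fun i _ => mul_le_mul_of_nonneg_left (hM i) (hw0 i)
    _ = M := by rw [← Finset.sum_mul, hwsum, one_mul]


theorem argmin_convergence_convex (p : ℕ)
    (f : ℝ → (Fin p → ℝ) → ℝ) (g : (Fin p → ℝ) → ℝ)
    (hf : ∀ ε : ℝ, 0 < ε → ConvexOn ℝ Set.univ (f ε))
    (hg : ConvexOn ℝ Set.univ g)
    (ustar : Fin p → ℝ)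
    (hmin : ∀ u, g ustar ≤ g u)
    (huniq : ∀ u, (∀ v, g u ≤ g v) → u = ustar)
    (hpt : ∀ u, Tendsto (fun ε => f ε u) (𝓝[>] 0) (𝓝 (g u)))
    (uε : ℝ → (Fin p → ℝ))
    (hargmin : ∀ ε : ℝ, 0 < ε → ∀ u, f ε (uε ε) ≤ f ε u) :
    Tendsto uε (𝓝[>] 0) (𝓝 ustar) := by
  classical
  rcases Nat.eq_zero_or_pos p with hp | hp
  · subst hp
    have huε : uε = fun _ => ustar := funext fun ε => Subsingleton.elim _ _
    rw [huε]
    exact tendsto_const_nhds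
  haveI : Nonempty (Fin p) := ⟨⟨0, hp⟩⟩
  rw [Metric.tendsto_nhds]
  intro δ hδ
  obtain ⟨r, hrdef⟩ : ∃ r : ℝ, r = δ / 2 := ⟨_, rfl⟩
  have hr : 0 < r := by rw [hrdef]; positivity
  set S : Set (Fin p → ℝ) := Metric.sphere ustar r with hS
  have hScomp : IsCompact S := isCompact_sphere _ _
  have hSne : S.Nonempty := NormedSpace.sphere_nonempty.2 hr.le
  have hgcont : ContinuousOn g S :=
    (hg.continuousOn isOpen_univ).mono (Set.subset_univ _)
  obtain ⟨w₀, hw₀S, hw₀min⟩ := hScomp.exists_isMinOn hSne hgcont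
  obtain ⟨m, hmdef⟩ : ∃ m : ℝ, m = g w₀ - g ustar := ⟨_, rfl⟩
  have hm : 0 < m := by
    have hne : w₀ ≠ ustar := by
      intro h
      have : dist w₀ ustar = r := Metric.mem_sphere.1 hw₀S
      rw [h, dist_self] at this
      exact hr.ne this
    have : g ustar < g w₀ := by
      rcases lt_or_ge (g ustar) (g w₀) with h | h
      · exact h
      · exact absurd (huniq w₀ (fun v => h.trans (hmin v))) hne
    rw [hmdef]; linarith
  -- simplex bound vertices for the ball of radius 3r
  obtain ⟨V, hV⟩ := upper_bound_on_ball ustar (3 * r) (by positivity)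
  obtain ⟨Mg, hMg⟩ : ∃ Mg : ℝ, Mg = Finset.univ.sup' Finset.univ_nonempty (fun i => g (V i)) :=
    ⟨_, rfl⟩
  obtain ⟨M', hM'⟩ : ∃ M' : ℝ, M' = Mg + 1 := ⟨_, rfl⟩
  obtain ⟨M, hM⟩ : ∃ M : ℝ, M = |M'| + 2 * |g ustar| + 2 := ⟨_, rfl⟩
  have hM'leM : M' ≤ M := by
    have := le_abs_self M'
    have := abs_nonneg (g ustar)
    rw [hM]; linarith
  have hMpos : 0 < M := by
    have := abs_nonneg M'
    have := abs_nonneg (g ustar)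
    rw [hM]; linarith
  obtain ⟨K, hKdef⟩ : ∃ K : ℝ, K = 2 * M / r := ⟨_, rfl⟩
  have hK0 : 0 ≤ K := by rw [hKdef]; positivity
  obtain ⟨ρ, hρdef⟩ : ∃ ρ : ℝ, ρ = m / (4 * (K + 1)) := ⟨_, rfl⟩
  have hρ : 0 < ρ := by rw [hρdef]; positivity
  -- finite net on S
  obtain ⟨F, hF⟩ := hScomp.elim_finite_subcover
    (fun w : S => Metric.ball (w : Fin p → ℝ) ρ) (fun _ => Metric.isOpen_ball)
    (fun x hx => Set.mem_iUnion.2 ⟨⟨x, hx⟩, Metric.mem_ball_self hρ⟩)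
  -- eventual facts
  have ev1 : ∀ᶠ ε in 𝓝[>] (0:ℝ), ∀ i, |f ε (V i) - g (V i)| < 1 := by
    rw [eventually_all]
    intro i
    have := Metric.tendsto_nhds.mp (hpt (V i)) 1 one_pos
    simpa [Real.dist_eq] using this
  have ev2 : ∀ᶠ ε in 𝓝[>] (0:ℝ), |f ε ustar - g ustar| < min 1 (m / 4) := by
    have := Metric.tendsto_nhds.mp (hpt ustar) (min 1 (m / 4)) (lt_min one_pos (by positivity))
    simpa [Real.dist_eq] using this
  have ev3 : ∀ᶠ ε in 𝓝[>] (0:ℝ), ∀ w ∈ F, |f ε (w : Fin p → ℝ) - g w| < m / 4 := by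
    rw [Filter.eventually_all_finset]
    intro w _
    have := Metric.tendsto_nhds.mp (hpt (w : Fin p → ℝ)) (m / 4) (by positivity)
    simpa [Real.dist_eq] using this
  filter_upwards [ev1, ev2, ev3, self_mem_nhdsWithin] with ε h1 h2 h3 hε
  rw [Set.mem_Ioi] at hε
  -- upper bound on the ball of radius 3r
  have hub : ∀ a, dist a ustar ≤ 3 * r → f ε a ≤ M' := by
    refine hV (f ε) (hf ε hε) M' (fun i => ?_)
    have h1i := (abs_lt.1 (h1 i)).2
    have : g (V i) ≤ Mg := by
      rw [hMg]; exact Finset.le_sup' (fun i => g (V i)) (Finset.mem_univ i)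
    rw [hM']; linarith
  -- lower bound on the ball of radius 3r
  have hfu : |f ε ustar - g ustar| < 1 := (h2.trans_le (min_le_left _ _))
  have hlb : ∀ a, dist a ustar ≤ 3 * r → -M ≤ f ε a := by
    intro a ha
    set b : Fin p → ℝ := (2:ℝ) • ustar - a with hb
    have hbmem : dist b ustar ≤ 3 * r := by
      have : b - ustar = ustar - a := by rw [hb]; module
      rw [dist_eq_norm, this, ← dist_eq_norm, dist_comm]
      exact ha
    have hfb : f ε b ≤ M' := hub b hbmem
    have hmid := (hf ε hε).2 (Set.mem_univ a) (Set.mem_univ b)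
      (by norm_num : (0:ℝ) ≤ 1/2) (by norm_num : (0:ℝ) ≤ 1/2) (by norm_num)
    have hmideq : (1/2 : ℝ) • a + (1/2 : ℝ) • b = ustar := by rw [hb]; module
    rw [hmideq] at hmid
    simp only [smul_eq_mul] at hmid
    have h2' := (abs_lt.1 hfu).1
    have h3' := neg_abs_le (g ustar)
    have h4' := le_abs_self M'
    rw [hM]; linarith
  -- Lipschitz on ball of radius 2r
  have hlip : LipschitzOnWith (2 * M / r).toNNReal (f ε) (Metric.ball ustar (2 * r)) := by
    have habs : ∀ a, dist a ustar < 3 * r → |f ε a| ≤ M :=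
      fun a ha => abs_le.2 ⟨hlb a ha.le, (hub a ha.le).trans hM'leM⟩
    have := ((hf ε hε).subset (Set.subset_univ _)
      (convex_ball _ _)).lipschitzOnWith_of_abs_le hr habs
    rwa [show (3:ℝ) * r - r = 2 * r by ring] at this
  -- key: f ε ustar < f ε w for all w on the sphere
  have key : ∀ w ∈ S, f ε ustar < f ε w := by
    intro w hw
    obtain ⟨i, hiF, hwi⟩ := Set.mem_iUnion₂.1 (hF hw)
    have hwball : w ∈ Metric.ball ustar (2 * r) := by
      have : dist w ustar = r := Metric.mem_sphere.1 hw
      rw [Metric.mem_ball, this]; linarith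
    have hiball : (i : Fin p → ℝ) ∈ Metric.ball ustar (2 * r) := by
      have : dist (i : Fin p → ℝ) ustar = r := Metric.mem_sphere.1 i.2
      rw [Metric.mem_ball, this]; linarith
    have hd := hlip.dist_le_mul w hwball i hiball
    rw [Real.coe_toNNReal _ (by positivity)] at hd
    have hdist : dist (w : Fin p → ℝ) i < ρ := Metric.mem_ball.1 hwi
    have hKρ : K * ρ < m / 4 := by
      have h4 : (K + 1) * ρ = m / 4 := by
        rw [hρdef]; field_simp
      nlinarith [hρ, h4]
    have hclose : dist (f ε w) (f ε i) < m / 4 := by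
      calc dist (f ε w) (f ε i) ≤ K * dist (w : Fin p → ℝ) i := by rw [hKdef]; exact hd
      _ ≤ K * ρ := mul_le_mul_of_nonneg_left hdist.le hK0
      _ < m / 4 := hKρ
    -- combine estimates
    have hgi : g w₀ ≤ g (i : Fin p → ℝ) := hw₀min i.2
    have h3i := abs_lt.1 (h3 i hiF)
    have h2m := h2.trans_le (min_le_right _ _)
    have h2m' := abs_lt.1 h2m
    have hwi' : |f ε w - f ε (i : Fin p → ℝ)| < m / 4 := by
      rw [← Real.dist_eq]; exact hclose
    have hwi'' := abs_lt.1 hwi'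
    rw [hmdef] at h3i h2m' hwi''
    linarith [h3i.1, h3i.2, h2m'.1, h2m'.2, hwi''.1, hwi''.2, hgi]
  -- conclude
  have hle : dist (uε ε) ustar ≤ r := by
    by_contra hcon
    push_neg at hcon
    obtain ⟨d, hd⟩ : ∃ d : ℝ, d = dist (uε ε) ustar := ⟨_, rfl⟩
    rw [← hd] at hcon
    have hd0 : 0 < d := hr.trans hcon
    obtain ⟨t, ht⟩ : ∃ t : ℝ, t = r / d := ⟨_, rfl⟩
    have ht0 : 0 < t := by rw [ht]; positivity
    have ht1 : t < 1 := by rw [ht]; exact (div_lt_one hd0).2 hcon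
    obtain ⟨w, hwdef⟩ : ∃ w : Fin p → ℝ, w = ustar + t • (uε ε - ustar) := ⟨_, rfl⟩
    have hwS : w ∈ S := by
      have h1' : w - ustar = t • (uε ε - ustar) := by rw [hwdef]; abel
      have hdw : dist w ustar = t * d := by
        rw [dist_eq_norm, h1', norm_smul, Real.norm_eq_abs, abs_of_pos ht0,
          ← dist_eq_norm, ← hd]
      rw [hS, Metric.mem_sphere, hdw, ht]
      field_simp
    have hconv := (hf ε hε).2 (Set.mem_univ ustar) (Set.mem_univ (uε ε))
      (by linarith : (0:ℝ) ≤ 1 - t) ht0.le (by ring)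
    have hweq : (1 - t) • ustar + t • uε ε = w := by rw [hwdef]; module
    rw [hweq] at hconv
    simp only [smul_eq_mul] at hconv
    have hmin' := hargmin ε hε ustar
    have hkey := key w hwS
    have hle' : f ε w ≤ f ε ustar := by nlinarith [ht0.le]
    linarith
  rw [hrdef] at hle
  linarith [hle, hδ]
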